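/- For a bipartite (2,0) void-rule CRN, D is reachable from I if and only if there exists a nonnegative integer assignment f on the rules such that for every species s, the sum of f(R) over rules R consuming s equals (I − D)(s). That is, reachability is equivalent to the existence of a nonnegative integer solution to the linear system given by the rule-application counts, with no ordering constraints needed. -/

import Mathlib

abbrev Config (Λ : Type*) := Λ → ℕ
abbrev Rule (Λ : Type*) := (Λ → ℕ) × (Λ → ℕ)

def Applicable {Λ : Type*} (R : Rule Λ) (C : Config Λ) : Prop := ∀ i, R.1 i ≤ C i

def applyRule {Λ : Type*} (R : Rule Λ) (C : Config Λ) : Config Λ :=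
  fun i => C i + R.2 i - R.1 i

def Step {Λ : Type*} (Γ : Set (Rule Λ)) (C C' : Config Λ) : Prop :=
  ∃ R ∈ Γ, Applicable R C ∧ C' = applyRule R C

def Reachable {Λ : Type*} (Γ : Set (Rule Λ)) : Config Λ → Config Λ → Prop :=
  Relation.ReflTransGen (Step Γ)

section Aux

variable {A B : Type*} [DecidableEq A] [DecidableEq B]

private def vv (p : A × B) : (A ⊕ B) → ℕ :=
  Pi.single (Sum.inl p.1) 1 + Pi.single (Sum.inr p.2) 1

private lemma reach_mono {E : Finset (A × B)} {C D : Config (A ⊕ B)}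
    (h : Reachable {R : Rule (A ⊕ B) | ∃ p ∈ E, R = (vv p, fun _ => 0)} C D) :
    ∀ i, D i ≤ C i := by
  induction h with
  | refl => exact fun i => le_rfl
  | tail _ hstep ih =>
    obtain ⟨R, hR, happ, rfl⟩ := hstep
    obtain ⟨p, _, rfl⟩ := hR
    intro i
    refine le_trans ?_ (ih i)
    simp only [applyRule]
    omega

private lemma back_aux (E : Finset (A × B)) (D : Config (A ⊕ B)) :
    ∀ (N : ℕ) (I : Config (A ⊕ B)) (f : A × B → ℕ),
      (∑ p ∈ E, f p = N) →
      (∀ s, D s + ∑ p ∈ E, f p * vv p s = I s) →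
      Reachable {R : Rule (A ⊕ B) | ∃ p ∈ E, R = (vv p, fun _ => 0)} I D := by
  intro N
  induction N with
  | zero =>
    intro I f hsum h
    have hf : ∀ p ∈ E, f p = 0 := fun p hp =>
      (Finset.sum_eq_zero_iff.mp hsum) p hp
    have hEq : I = D := by
      funext s
      have := h s
      rw [Finset.sum_congr rfl (fun p hp => by rw [hf p hp, zero_mul])] at this
      simp at this
      omega
    rw [hEq]
    exact Relation.ReflTransGen.refl
  | succ n ih =>
    intro I f hsum h
    obtain ⟨p, hp, hfp⟩ : ∃ p ∈ E, f p ≠ 0 := by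
      by_contra hc
      push_neg at hc
      rw [Finset.sum_congr rfl hc] at hsum
      simp at hsum
    have hle : ∀ s, f p * vv p s ≤ ∑ q ∈ E, f q * vv q s := fun s =>
      Finset.single_le_sum (f := fun q => f q * vv q s) (fun q _ => Nat.zero_le _) hp
    have hone : ∀ s, vv p s ≤ I s := by
      intro s
      have h1 := hle s
      have h2 := h s
      have h3 : vv p s ≤ f p * vv p s :=
        Nat.le_mul_of_pos_left _ (Nat.pos_of_ne_zero hfp)
      omega
    set C : Config (A ⊕ B) := fun s => I s - vv p s with hC
    have hstep : Step {R : Rule (A ⊕ B) | ∃ p ∈ E, R = (vv p, fun _ => 0)} I C := by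
      refine ⟨(vv p, fun _ => 0), ⟨p, hp, rfl⟩, hone, ?_⟩
      funext s
      simp [applyRule, hC]
    set f' : A × B → ℕ := Function.update f p (f p - 1) with hf'
    have e4 : f' p = f p - 1 := Function.update_self p (f p - 1) f
    have hsum' : ∑ q ∈ E, f' q = n := by
      have e1 := Finset.add_sum_erase E f hp
      have e2 := Finset.add_sum_erase E f' hp
      have e3 : ∑ q ∈ E.erase p, f' q = ∑ q ∈ E.erase p, f q :=
        Finset.sum_congr rfl (fun q hq =>
          Function.update_of_ne (Finset.ne_of_mem_erase hq) _ _)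
      omega
    have hrec : Reachable {R : Rule (A ⊕ B) | ∃ p ∈ E, R = (vv p, fun _ => 0)} C D := by
      apply ih C f' hsum'
      intro s
      have e1 := Finset.add_sum_erase E (fun q => f q * vv q s) hp
      have e2 := Finset.add_sum_erase E (fun q => f' q * vv q s) hp
      have e3 : ∑ q ∈ E.erase p, f' q * vv q s = ∑ q ∈ E.erase p, f q * vv q s :=
        Finset.sum_congr rfl (fun q hq => by
          rw [hf', Function.update_of_ne (Finset.ne_of_mem_erase hq)])
      have e5 : f' p * vv p s + vv p s = f p * vv p s := by
        rw [e4]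
        have : f p = f p - 1 + 1 := (Nat.succ_pred_eq_of_pos (Nat.pos_of_ne_zero hfp)).symm
        conv_rhs => rw [this]
        ring
      have hI := h s
      have hCi : C s = I s - vv p s := rfl
      have := hone s
      omega
    exact Relation.ReflTransGen.head hstep hrec

end Aux

/-- for a bipartite (2,0) void-rule CRN (species `A ⊕ B`, rules
`x + y → ∅` for `(x,y) ∈ E ⊆ A × B`), `D` is reachable from `I` iff there is a
nonnegative integer assignment `f` on the rules such that for every species `s`, the
total consumption of `s` over all rule applications equals `(I - D)(s)` — no ordering
constraints are needed. -/
theorem stmt12 {A B : Type*} [DecidableEq A] [DecidableEq B]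
    (E : Finset (A × B)) (I D : Config (A ⊕ B)) (hID : ∀ i, D i ≤ I i) :
    Reachable {R : Rule (A ⊕ B) | ∃ p ∈ E,
        R = ((Pi.single (Sum.inl p.1) 1 + Pi.single (Sum.inr p.2) 1 : (A ⊕ B) → ℕ),
             fun _ => 0)} I D ↔
      ∃ f : A × B → ℕ, (∀ p ∉ E, f p = 0) ∧
        ∀ s, ∑ p ∈ E,
            f p * (Pi.single (Sum.inl p.1) 1 + Pi.single (Sum.inr p.2) 1 : (A ⊕ B) → ℕ) s
          = I s - D s := by
  have hΓ : {R : Rule (A ⊕ B) | ∃ p ∈ E,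
        R = ((Pi.single (Sum.inl p.1) 1 + Pi.single (Sum.inr p.2) 1 : (A ⊕ B) → ℕ),
             fun _ => 0)} = {R : Rule (A ⊕ B) | ∃ p ∈ E, R = (vv p, fun _ => 0)} := rfl
  rw [hΓ]
  constructor
  · intro h
    clear hID
    induction h using Relation.ReflTransGen.head_induction_on with
    | refl =>
      exact ⟨fun _ => 0, fun _ _ => rfl, fun s => by simp⟩
    | @head I₀ C₀ hstep hr ih =>
      obtain ⟨f, hf0, hf⟩ := ih
      obtain ⟨R, hR, happ, hCeq⟩ := hstep
      obtain ⟨p, hp, rfl⟩ := hR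
      refine ⟨fun q => f q + if q = p then 1 else 0, ?_, ?_⟩
      · intro q hq
        simp only
        rw [hf0 q hq, if_neg (show ¬ q = p from fun he => hq (by rw [he]; exact hp))]
      · intro s
        have hf' : ∀ s, ∑ q ∈ E, f q * vv q s = C₀ s - D s := hf
        have hCD : D s ≤ C₀ s := reach_mono hr s
        have hCs : C₀ s = I₀ s - vv p s := by
          rw [hCeq]; simp [applyRule]
        have happs : vv p s ≤ I₀ s := happ s
        show ∑ q ∈ E, (f q + if q = p then 1 else 0) * vv q s = I₀ s - D s
        rw [Finset.sum_congr rfl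
            (fun q _ => by rw [add_mul, ite_mul, one_mul, zero_mul]),
          Finset.sum_add_distrib, hf' s,
          Finset.sum_ite_eq' E p (fun q => vv q s), if_pos hp]
        omega
  · rintro ⟨f, _, hf⟩
    apply back_aux E D (∑ p ∈ E, f p) I f rfl
    intro s
    have hf' : ∑ p ∈ E, f p * vv p s = I s - D s := hf s
    have := hID s
    omega
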